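/- For rank-one orthogonal projections P and Q on ℂ², the squared operator norm of P - Q equals 1 - tr(PQ), which also equals -det(P - Q), and equals 1 - ‖(1-P) - Q‖². -/

import Mathlib

noncomputable section

/-- An effect on a complex Hilbert space: a positive operator below the identity. -/
def IsEffect {H : Type*} [NormedAddCommGroup H] [InnerProductSpace ℂ H] [CompleteSpace H]
    (A : H →L[ℂ] H) : Prop :=
  A.IsPositive ∧ ((1 : H →L[ℂ] H) - A).IsPositive

/-- Effects `A`, `B` are coexistent: there are effects `M ≤ A`, `N ≤ I - A` with `M + N = B`. -/
def Coexistent {H : Type*} [NormedAddCommGroup H] [InnerProductSpace ℂ H] [CompleteSpace H]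
    (A B : H →L[ℂ] H) : Prop :=
  ∃ M N : H →L[ℂ] H, IsEffect M ∧ IsEffect N ∧
    (A - M).IsPositive ∧ (((1 : H →L[ℂ] H) - A) - N).IsPositive ∧ M + N = B

/-- A rank-one orthogonal projection. -/
def IsRankOneProjection {H : Type*} [NormedAddCommGroup H] [InnerProductSpace ℂ H]
    [CompleteSpace H] (P : H →L[ℂ] H) : Prop :=
  IsSelfAdjoint P ∧ P ∘L P = P ∧ Module.finrank ℂ (LinearMap.range (P : H →ₗ[ℂ] H)) = 1

/-- The strength function `Λ(B,P) = sup {λ ≥ 0 : λP ≤ B}`. -/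
def strength {H : Type*} [NormedAddCommGroup H] [InnerProductSpace ℂ H] [CompleteSpace H]
    (B P : H →L[ℂ] H) : ℝ :=
  sSup {l : ℝ | 0 ≤ l ∧ (B - (l : ℂ) • P).IsPositive}

abbrev E2 := EuclideanSpace ℂ (Fin 2)

open Matrix LinearMap ContinuousLinearMap in
lemma ch2 (M : Matrix (Fin 2) (Fin 2) ℂ) :
    M * M = M.trace • M - M.det • (1 : Matrix (Fin 2) (Fin 2) ℂ) := by
  ext i j
  fin_cases i <;> fin_cases j <;>
    simp [Matrix.mul_apply, Matrix.trace_fin_two, Matrix.det_fin_two, Fin.sum_univ_two,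
      Matrix.one_apply] <;> ring

lemma mat_key (A B : Matrix (Fin 2) (Fin 2) ℂ) (hA : A * A = A) (hB : B * B = B)
    (tA : A.trace = 1) (tB : B.trace = 1) :
    (A - B) * (A - B) = (1 - (A * B).trace) • (1 : Matrix (Fin 2) (Fin 2) ℂ) ∧
    (A - B).det = (A * B).trace - 1 := by
  have htr : (A - B).trace = 0 := by simp [tA, tB]
  have h1 : (A - B) * (A - B) = - (A-B).det • 1 := by rw [ch2, htr]; simp
  have h2 : ((A - B) * (A - B)).trace = (A*A).trace - (A*B).trace - (B*A).trace + (B*B).trace := by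
    simp [sub_mul, mul_sub]; ring
  have h3 : ((A - B) * (A - B)).trace = - (A-B).det * 2 := by
    rw [h1]; simp [Matrix.trace_smul, Matrix.trace_one]
  have h4 : (B*A).trace = (A*B).trace := Matrix.trace_mul_comm B A
  have hdet : (A - B).det = (A*B).trace - 1 := by
    rw [hA, hB] at h2; rw [h3, h4, tA, tB] at h2; linear_combination -h2/2
  refine ⟨?_, hdet⟩
  rw [h1, hdet]; module

-- trace of idempotent with rank-one range is 1
lemma trace_proj (P : E2 →L[ℂ] E2) (h2 : P ∘L P = P)
    (h3 : Module.finrank ℂ (LinearMap.range (P : E2 →ₗ[ℂ] E2)) = 1) :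
    LinearMap.trace ℂ E2 (P : E2 →ₗ[ℂ] E2) = 1 := by
  have hid : (P : E2 →ₗ[ℂ] E2) ∘ₗ (P : E2 →ₗ[ℂ] E2) = (P : E2 →ₗ[ℂ] E2) := by
    rw [← ContinuousLinearMap.toLinearMap_comp, h2]
  obtain ⟨p, hp⟩ := (LinearMap.isProj_iff_isIdempotentElem _).mpr hid
  have hpr : p = LinearMap.range (P : E2 →ₗ[ℂ] E2) := by
    apply le_antisymm
    · intro x hx
      exact ⟨x, hp.map_id x hx⟩
    · rintro x ⟨y, rfl⟩
      exact hp.map_mem y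
  rw [hp.trace, hpr, h3]
  norm_num

lemma keyC (P Q : E2 →L[ℂ] E2) (hP : IsRankOneProjection P) (hQ : IsRankOneProjection Q) :
    ((‖P - Q‖ : ℂ)) ^ 2 = 1 - LinearMap.trace ℂ E2 ((P ∘L Q) : E2 →ₗ[ℂ] E2) ∧
    LinearMap.det ((P - Q) : E2 →ₗ[ℂ] E2) =
      LinearMap.trace ℂ E2 ((P ∘L Q) : E2 →ₗ[ℂ] E2) - 1 := by
  classical
  set b : Module.Basis (Fin 2) ℂ E2 := (PiLp.basisFun 2 ℂ (Fin 2)) with hb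
  set τ : ℂ := LinearMap.trace ℂ E2 ((P ∘L Q) : E2 →ₗ[ℂ] E2) with hτ
  set A := LinearMap.toMatrix b b (P : E2 →ₗ[ℂ] E2) with hA
  set B := LinearMap.toMatrix b b (Q : E2 →ₗ[ℂ] E2) with hB
  have hAA : A * A = A := by
    rw [hA, ← LinearMap.toMatrix_comp b b b, ← ContinuousLinearMap.toLinearMap_comp, hP.2.1]
  have hBB : B * B = B := by
    rw [hB, ← LinearMap.toMatrix_comp b b b, ← ContinuousLinearMap.toLinearMap_comp, hQ.2.1]
  have htA : A.trace = 1 := by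
    rw [hA, ← LinearMap.trace_eq_matrix_trace]; exact trace_proj P hP.2.1 hP.2.2
  have htB : B.trace = 1 := by
    rw [hB, ← LinearMap.trace_eq_matrix_trace]; exact trace_proj Q hQ.2.1 hQ.2.2
  have hτAB : τ = (A * B).trace := by
    rw [hτ, hA, hB, ← LinearMap.toMatrix_comp b b b, ← LinearMap.trace_eq_matrix_trace,
      ← ContinuousLinearMap.toLinearMap_comp]
  obtain ⟨hsq, hdet⟩ := mat_key A B hAA hBB htA htB
  -- det of the linear map
  have hdetL : LinearMap.det ((P - Q) : E2 →ₗ[ℂ] E2) = τ - 1 := by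
    rw [← LinearMap.det_toMatrix b, hτAB, ← hdet]
    congr 1
  -- (P-Q)∘(P-Q) = (1-τ)•1 as CLMs
  have hDD : (P - Q) ∘L (P - Q) = (1 - τ) • (1 : E2 →L[ℂ] E2) := by
    apply ContinuousLinearMap.coe_injective
    apply (LinearMap.toMatrix b b).injective
    push_cast [ContinuousLinearMap.toLinearMap_comp, ContinuousLinearMap.coe_smul,
      ContinuousLinearMap.coe_sub, ContinuousLinearMap.one_def, ContinuousLinearMap.coe_id]
    rw [LinearMap.toMatrix_comp b b b, map_sub, ← hA, ← hB, hsq, hτAB,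
      _root_.map_smul, LinearMap.toMatrix_id]
  -- 1 - τ is a nonneg real
  set v : E2 := EuclideanSpace.single (0 : Fin 2) (1 : ℂ) with hv
  have hvn : ‖v‖ = 1 := by simp [hv]
  have hPa : ContinuousLinearMap.adjoint P = P := by
    rw [← ContinuousLinearMap.star_eq_adjoint]; exact hP.1
  have hQa : ContinuousLinearMap.adjoint Q = Q := by
    rw [← ContinuousLinearMap.star_eq_adjoint]; exact hQ.1
  have hadj : ContinuousLinearMap.adjoint (P - Q) = P - Q := by rw [map_sub, hPa, hQa]
  have hinner : (1 - τ) = (‖(P - Q) v‖ : ℂ) ^ 2 := by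
    have e1 : inner ℂ v (((P - Q) ∘L (P - Q)) v) = ((‖(P - Q) v‖ : ℂ)) ^ 2 := by
      rw [ContinuousLinearMap.comp_apply, ← hadj, ContinuousLinearMap.adjoint_inner_right,
        hadj, inner_self_eq_norm_sq_to_K]
      norm_cast
    have e2 : inner ℂ v (((1 - τ) • (1 : E2 →L[ℂ] E2)) v) = (1 - τ) * (‖v‖ : ℂ) ^ 2 := by
      rw [ContinuousLinearMap.smul_apply, inner_smul_right, ContinuousLinearMap.one_apply,
        inner_self_eq_norm_sq_to_K]
      norm_cast
    rw [← e1, hDD, e2, hvn]; push_cast; ring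
  have hr : (1 - τ) = ((‖(P - Q) v‖ ^ 2 : ℝ) : ℂ) := by rw [hinner]; push_cast; ring
  -- norm computation
  have hnorm : ‖P - Q‖ * ‖P - Q‖ = ‖(P - Q) v‖ ^ 2 := by
    rw [← ContinuousLinearMap.norm_adjoint_comp_self, hadj, hDD, hr]
    simp [norm_smul, ContinuousLinearMap.one_def, ContinuousLinearMap.norm_id,
      abs_of_nonneg (sq_nonneg (‖(P - Q) v‖))]
  constructor
  · rw [hr]
    norm_cast
    rw [sq]
    exact hnorm
  · rw [hdetL]


lemma compl_rop (P : E2 →L[ℂ] E2) (hP : IsRankOneProjection P) :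
    IsRankOneProjection ((1 : E2 →L[ℂ] E2) - P) := by
  have hmul : P * P = P := hP.2.1
  refine ⟨?_, ?_, ?_⟩
  · have : star ((1 : E2 →L[ℂ] E2) - P) = 1 - P := by
      rw [ContinuousLinearMap.star_eq_adjoint, map_sub, hP.1.adjoint_eq,
        ContinuousLinearMap.one_def, ContinuousLinearMap.adjoint_id]
    exact this
  · show ((1 : E2 →L[ℂ] E2) - P) * (1 - P) = 1 - P
    rw [sub_mul, one_mul, mul_sub, mul_one, hmul]
    abel
  · have hrange : LinearMap.range (((1 : E2 →L[ℂ] E2) - P) : E2 →ₗ[ℂ] E2)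
        = LinearMap.ker ((P : E2 →ₗ[ℂ] E2)) := by
      apply le_antisymm
      · rintro x ⟨y, rfl⟩
        have : P (((1 : E2 →L[ℂ] E2) - P) y) = 0 := by
          have := congrArg (fun f => f y) hP.2.1
          simp only [ContinuousLinearMap.comp_apply] at this
          simp [this]
        simpa [LinearMap.mem_ker] using this
      · intro x hx
        refine ⟨x, ?_⟩
        have hx0 : P x = 0 := hx
        simp [hx0]
    rw [ContinuousLinearMap.coe_sub, hrange]
    have hrn := LinearMap.finrank_range_add_finrank_ker ((P : E2 →ₗ[ℂ] E2))
    have hdim : Module.finrank ℂ E2 = 2 := by simp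
    rw [hP.2.2, hdim] at hrn
    omega

lemma trace_compl (P Q : E2 →L[ℂ] E2) (hQ : IsRankOneProjection Q) :
    LinearMap.trace ℂ E2 ((((1 : E2 →L[ℂ] E2) - P) ∘L Q) : E2 →ₗ[ℂ] E2)
      = 1 - LinearMap.trace ℂ E2 ((P ∘L Q) : E2 →ₗ[ℂ] E2) := by
  have h1 : ((1 : E2 →L[ℂ] E2) - P) ∘L Q = Q - P ∘L Q := by
    ext x; simp
  rw [h1, ContinuousLinearMap.coe_sub, map_sub, trace_proj Q hQ.2.1 hQ.2.2]


theorem norm_sq_sub_of_rankOneProjections (P Q : E2 →L[ℂ] E2)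
    (hP : IsRankOneProjection P) (hQ : IsRankOneProjection Q) :
    ((‖P - Q‖ : ℂ) ^ 2 = 1 - LinearMap.trace ℂ E2 ((P ∘L Q) : E2 →ₗ[ℂ] E2)) ∧
    ((‖P - Q‖ : ℂ) ^ 2 = - LinearMap.det ((P - Q) : E2 →ₗ[ℂ] E2)) ∧
    (‖P - Q‖ ^ 2 = 1 - ‖((1 : E2 →L[ℂ] E2) - P) - Q‖ ^ 2) := by
  obtain ⟨g1, g2⟩ := keyC P Q hP hQ
  obtain ⟨g3, _⟩ := keyC ((1 : E2 →L[ℂ] E2) - P) Q (compl_rop P hP) hQ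
  rw [trace_compl P Q hQ] at g3
  refine ⟨g1, ?_, ?_⟩
  · rw [g2, g1]; ring
  · have hc : ((‖P - Q‖ ^ 2 + ‖((1 : E2 →L[ℂ] E2) - P) - Q‖ ^ 2 : ℝ) : ℂ) = ((1 : ℝ) : ℂ) := by
      push_cast
      linear_combination g1 + g3
    have := Complex.ofReal_injective hc
    linarith
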